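/- The homomorphism b: K₀(Λ) → K₀(Ω) defined on classes of finitely generated projective Λ-modules by b([P]) = [k ⊗_R P] is injective. -/

import Mathlib

/-! ### Grothendieck groups `G₀` and `K₀` of a ring

`G0 S` is the Grothendieck group of the category of finitely generated (left) `S`-modules:
the free abelian group on (bundled) finitely generated `S`-modules modulo the relation
`[B] = [A] + [C]` for every short exact sequence `0 → A → B → C → 0`.

`K0 S` is the Grothendieck group of the category of finitely generated projective (left)
`S`-modules: the free abelian group on bundled finitely generated projective `S`-modules
modulo the relations `[B] = [A] + [C]` whenever `B ≅ A ⊕ C`. -/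

/-- A bundled finitely generated (left) module over the ring `S`. -/
structure FGMod (S : Type) [Ring S] : Type 1 where
  carrier : Type
  [isAddCommGroup : AddCommGroup carrier]
  [isModule : Module S carrier]
  [isFinite : Module.Finite S carrier]

attribute [instance] FGMod.isAddCommGroup FGMod.isModule FGMod.isFinite

/-- A bundled finitely generated projective (left) module over the ring `S`. -/
structure PMod (S : Type) [Ring S] : Type 1 where
  carrier : Type
  [isAddCommGroup : AddCommGroup carrier]
  [isModule : Module S carrier]
  [isFinite : Module.Finite S carrier]
  [isProjective : Module.Projective S carrier]

attribute [instance] PMod.isAddCommGroup PMod.isModule PMod.isFinite PMod.isProjective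

/-- The Grothendieck group of the category of finitely generated `S`-modules. -/
def G0 (S : Type) [Ring S] : Type 1 :=
  FreeAbelianGroup (FGMod S) ⧸ AddSubgroup.closure
    {x | ∃ (A B C : FGMod S) (f : A.carrier →ₗ[S] B.carrier) (g : B.carrier →ₗ[S] C.carrier),
      Function.Injective f ∧ Function.Surjective g ∧ Function.Exact f g ∧
      x = FreeAbelianGroup.of B - FreeAbelianGroup.of A - FreeAbelianGroup.of C}

noncomputable instance (S : Type) [Ring S] : AddCommGroup (G0 S) :=
  QuotientAddGroup.Quotient.addCommGroup _

/-- The class `[M]` of a finitely generated `S`-module `M` in `G0 S`. -/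
def G0.cls (S : Type) [Ring S] (M : Type) [AddCommGroup M] [Module S M]
    [Module.Finite S M] : G0 S :=
  QuotientAddGroup.mk (FreeAbelianGroup.of (FGMod.mk M))

/-- The Grothendieck group of the category of finitely generated projective `S`-modules. -/
def K0 (S : Type) [Ring S] : Type 1 :=
  FreeAbelianGroup (PMod S) ⧸ AddSubgroup.closure
    {x | ∃ A B C : PMod S, Nonempty (B.carrier ≃ₗ[S] A.carrier × C.carrier) ∧
      x = FreeAbelianGroup.of B - FreeAbelianGroup.of A - FreeAbelianGroup.of C}

noncomputable instance (S : Type) [Ring S] : AddCommGroup (K0 S) :=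
  QuotientAddGroup.Quotient.addCommGroup _

/-- The class `[P]` of a finitely generated projective `S`-module `P` in `K0 S`. -/
def K0.cls (S : Type) [Ring S] (P : Type) [AddCommGroup P] [Module S P]
    [Module.Finite S P] [Module.Projective S P] : K0 S :=
  QuotientAddGroup.mk (FreeAbelianGroup.of (PMod.mk P))

/-- `c : K0 S → G0 S` is the Cartan homomorphism iff it sends the `K₀`-class of every
finitely generated projective module to its `G₀`-class. (Such a homomorphism exists and is
unique, since `K0 S` is generated by the classes of finitely generated projective modules.) -/
def IsCartanMap (S : Type) [Ring S] (c : K0 S →+ G0 S) : Prop :=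
  ∀ (P : Type) [AddCommGroup P] [Module S P] [Module.Finite S P] [Module.Projective S P],
    c (K0.cls S P) = G0.cls S P

/-! ### The setting of Swan's theorem (§2 of the paper)

`R` is a discrete valuation ring with maximal ideal `𝔪`, field of fractions `K` and
residue field `k = R/𝔪`; `A` is a finite dimensional `K`-algebra and `Λ` is an `R`-order
in `A`, i.e. an `R`-subalgebra of `A` which is finitely generated as an `R`-module and
spans `A` over `K`.  The ring `Ω = k ⊗_R Λ = Λ/𝔪Λ` is encoded as an abstract ring
together with a surjective ring homomorphism `π : Λ → Ω` whose kernel is `𝔪Λ`. -/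

section OrderSetting

variable (R : Type) [CommRing R] [IsDomain R] [IsDiscreteValuationRing R]
variable (K : Type) [Field K] [Algebra R K] [IsFractionRing R K]
variable (A : Type) [Ring A] [Algebra K A] [FiniteDimensional K A]
variable [Algebra R A] [IsScalarTower R K A]

/-- `Λ` is an `R`-order in the finite dimensional `K`-algebra `A`:  a subring of `A`
which is an `R`-subalgebra, finitely generated as an `R`-module, and which spans `A`
as a `K`-vector space. -/
structure IsOrder (Λ : Subalgebra R A) : Prop where
  fg : Module.Finite R Λ
  spans : Submodule.span K (Λ : Set A) = ⊤

/-- `π : Λ →+* Ω` realizes `Ω` as `k ⊗_R Λ = Λ/𝔪Λ`, the reduction of `Λ` modulo the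
maximal ideal `𝔪` of `R`:  it is surjective with kernel `𝔪Λ`. -/
structure IsResidueRing {Λ : Subalgebra R A} {Ω : Type} [Ring Ω] (π : ↥Λ →+* Ω) : Prop where
  surjective : Function.Surjective π
  ker : ∀ x : ↥Λ, π x = 0 ↔
    x ∈ (IsLocalRing.maximalIdeal R) • (⊤ : Submodule R ↥Λ)

end OrderSetting

/-- `q : P →+ W` realizes the `Ω`-module `W` as the reduction `k ⊗_R P = P/𝔪P` of the
`Λ`-module `P` modulo the maximal ideal `𝔪` of `R` (via the reduction map `π : Λ → Ω`):
it is surjective, `Λ`-equivariant and has kernel `𝔪P`. -/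
structure IsReduction (R : Type) [CommRing R] [IsLocalRing R] {Λ₀ : Type} [Ring Λ₀]
    {Ω : Type} [Ring Ω] (π : Λ₀ →+* Ω)
    {P : Type} [AddCommGroup P] [Module R P] [Module Λ₀ P]
    {W : Type} [AddCommGroup W] [Module Ω W] (q : P →+ W) : Prop where
  surjective : Function.Surjective q
  equivariant : ∀ (a : Λ₀) (m : P), q (a • m) = π a • q m
  ker : ∀ m : P, q m = 0 ↔ m ∈ (IsLocalRing.maximalIdeal R) • (⊤ : Submodule R P)

/-! ### Auxiliary lemmas about `K0` -/

section K0Aux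

variable (S : Type) [Ring S]

/-- `P ≃ P × 0`. -/
def prodZeroEquiv (P : Type) [AddCommGroup P] [Module S P] :
    P ≃ₗ[S] P × (Fin 0 → S) where
  toFun p := (p, 0)
  map_add' a b := Prod.ext rfl (Subsingleton.elim _ _)
  map_smul' a b := Prod.ext rfl (Subsingleton.elim _ _)
  invFun := Prod.fst
  left_inv p := rfl
  right_inv x := Prod.ext rfl (Subsingleton.elim _ _)

theorem K0.cls_rel {S : Type} [Ring S] {A B C : Type}
    [AddCommGroup A] [Module S A] [Module.Finite S A] [Module.Projective S A]
    [AddCommGroup B] [Module S B] [Module.Finite S B] [Module.Projective S B]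
    [AddCommGroup C] [Module S C] [Module.Finite S C] [Module.Projective S C]
    (e : B ≃ₗ[S] A × C) : K0.cls S B = K0.cls S A + K0.cls S C := by
  have h : FreeAbelianGroup.of (PMod.mk B) - FreeAbelianGroup.of (PMod.mk A)
      - FreeAbelianGroup.of (PMod.mk C) ∈ AddSubgroup.closure
      {x | ∃ A' B' C' : PMod S, Nonempty (B'.carrier ≃ₗ[S] A'.carrier × C'.carrier) ∧
        x = FreeAbelianGroup.of B' - FreeAbelianGroup.of A' - FreeAbelianGroup.of C'} :=
    AddSubgroup.subset_closure ⟨PMod.mk A, PMod.mk B, PMod.mk C, ⟨e⟩, rfl⟩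
  show QuotientAddGroup.mk _ = QuotientAddGroup.mk _ + QuotientAddGroup.mk _
  refine Eq.trans (QuotientAddGroup.eq.mpr ?_) (QuotientAddGroup.mk_add _ _ _).symm
  have heq : -(FreeAbelianGroup.of (PMod.mk B : PMod S))
      + (FreeAbelianGroup.of (PMod.mk A : PMod S) + FreeAbelianGroup.of (PMod.mk C : PMod S))
      = -(FreeAbelianGroup.of (PMod.mk B : PMod S) - FreeAbelianGroup.of (PMod.mk A : PMod S)
        - FreeAbelianGroup.of (PMod.mk C : PMod S)) := by abel
  rw [heq]
  exact neg_mem h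

theorem K0.cls_zero : K0.cls S (Fin 0 → S) = 0 := by
  have h := K0.cls_rel (prodZeroEquiv S (Fin 0 → S))
  have h2 : K0.cls S (Fin 0 → S) + K0.cls S (Fin 0 → S)
      = K0.cls S (Fin 0 → S) + 0 := by rw [add_zero, ← h]
  exact (add_left_cancel h2)

theorem K0.cls_congr {S : Type} [Ring S] {P Q : Type}
    [AddCommGroup P] [Module S P] [Module.Finite S P] [Module.Projective S P]
    [AddCommGroup Q] [Module S Q] [Module.Finite S Q] [Module.Projective S Q]
    (e : P ≃ₗ[S] Q) : K0.cls S P = K0.cls S Q := by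
  have h := K0.cls_rel (e.trans (prodZeroEquiv S Q))
  rw [h, K0.cls_zero, add_zero]

theorem K0.cls_prod {S : Type} [Ring S] (P Q : Type)
    [AddCommGroup P] [Module S P] [Module.Finite S P] [Module.Projective S P]
    [AddCommGroup Q] [Module S Q] [Module.Finite S Q] [Module.Projective S Q] :
    K0.cls S (P × Q) = K0.cls S P + K0.cls S Q :=
  K0.cls_rel (LinearEquiv.refl S (P × Q))

/-! ### Isomorphism classes of f.g. projective modules, and group completion -/

/-- The setoid of linear isomorphism on bundled f.g. projective modules. -/
instance pclSetoid : Setoid (PMod S) where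
  r P Q := Nonempty (P.carrier ≃ₗ[S] Q.carrier)
  iseqv := ⟨fun P => ⟨LinearEquiv.refl _ _⟩, fun ⟨e⟩ => ⟨e.symm⟩,
    fun ⟨e⟩ ⟨f⟩ => ⟨e.trans f⟩⟩

/-- Isomorphism classes of f.g. projective `S`-modules. -/
abbrev PCl : Type 1 := Quotient (pclSetoid S)

/-- Product of bundled f.g. projective modules. -/
def PMod.prod {S : Type} [Ring S] (P Q : PMod S) : PMod S := PMod.mk (P.carrier × Q.carrier)

/-- The zero bundled module. -/
def PMod.zero : PMod S := PMod.mk (Fin 0 → S)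

noncomputable instance : Add (PCl S) :=
  ⟨Quotient.map₂ PMod.prod (by rintro a a' ⟨e⟩ b b' ⟨f⟩; exact ⟨e.prodCongr f⟩)⟩

instance : Zero (PCl S) := ⟨⟦PMod.zero S⟧⟩

noncomputable instance : AddCommMonoid (PCl S) where
  add := (· + ·)
  zero := 0
  add_assoc := by
    rintro ⟨a⟩ ⟨b⟩ ⟨c⟩
    exact Quotient.sound ⟨LinearEquiv.prodAssoc S a.carrier b.carrier c.carrier⟩
  zero_add := by
    rintro ⟨a⟩
    exact Quotient.sound
      ⟨(LinearEquiv.prodComm S _ _).trans (prodZeroEquiv S a.carrier).symm⟩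
  add_zero := by
    rintro ⟨a⟩
    exact Quotient.sound ⟨(prodZeroEquiv S a.carrier).symm⟩
  add_comm := by
    rintro ⟨a⟩ ⟨b⟩
    exact Quotient.sound ⟨LinearEquiv.prodComm S _ _⟩
  nsmul := nsmulRec

theorem PCl.mk_add (P Q : PMod S) :
    (⟦P⟧ + ⟦Q⟧ : PCl S) = ⟦PMod.prod P Q⟧ := rfl

/-- The group completion of `PCl S`. -/
instance gcSetoid : Setoid (PCl S × PCl S) where
  r x y := ∃ e : PCl S, x.1 + y.2 + e = y.1 + x.2 + e
  iseqv := by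
    constructor
    · exact fun x => ⟨0, rfl⟩
    · rintro x y ⟨e, h⟩; exact ⟨e, h.symm⟩
    · rintro x y z ⟨e, h⟩ ⟨f, h'⟩
      refine ⟨y.1 + y.2 + e + f, ?_⟩
      calc x.1 + z.2 + (y.1 + y.2 + e + f)
          = (x.1 + y.2 + e) + (y.1 + z.2 + f) := by abel
        _ = (y.1 + x.2 + e) + (z.1 + y.2 + f) := by rw [h, h']
        _ = z.1 + x.2 + (y.1 + y.2 + e + f) := by abel

/-- The Grothendieck group of stable isomorphism classes. -/
abbrev GC : Type 1 := Quotient (gcSetoid S)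

noncomputable instance : Add (GC S) :=
  ⟨Quotient.map₂ (fun x y => (x.1 + y.1, x.2 + y.2)) (by
    rintro ⟨a1, a2⟩ ⟨b1, b2⟩ ⟨e, he⟩ ⟨c1, c2⟩ ⟨d1, d2⟩ ⟨f, hf⟩
    refine ⟨e + f, ?_⟩
    calc a1 + c1 + (b2 + d2) + (e + f) = (a1 + b2 + e) + (c1 + d2 + f) := by abel
      _ = (b1 + a2 + e) + (d1 + c2 + f) := by rw [he, hf]
      _ = b1 + d1 + (a2 + c2) + (e + f) := by abel)⟩

instance : Zero (GC S) := ⟨⟦(0, 0)⟧⟩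

noncomputable instance : Neg (GC S) :=
  ⟨Quotient.map (fun x => (x.2, x.1)) (by
    rintro ⟨a1, a2⟩ ⟨b1, b2⟩ ⟨e, he⟩
    refine ⟨e, ?_⟩
    calc a2 + b1 + e = b1 + a2 + e := by abel
      _ = a1 + b2 + e := he.symm
      _ = b2 + a1 + e := by abel)⟩

noncomputable instance : AddCommGroup (GC S) where
  add := (· + ·)
  zero := 0
  neg := (- ·)
  add_assoc := by
    rintro ⟨⟨a1, a2⟩⟩ ⟨⟨b1, b2⟩⟩ ⟨⟨c1, c2⟩⟩
    exact Quotient.sound ⟨0, by dsimp only; abel⟩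
  zero_add := by rintro ⟨⟨a1, a2⟩⟩; exact Quotient.sound ⟨0, by dsimp only; abel⟩
  add_zero := by rintro ⟨⟨a1, a2⟩⟩; exact Quotient.sound ⟨0, by dsimp only; abel⟩
  neg_add_cancel := by rintro ⟨⟨a1, a2⟩⟩; exact Quotient.sound ⟨0, by abel⟩
  add_comm := by
    rintro ⟨⟨a1, a2⟩⟩ ⟨⟨b1, b2⟩⟩
    exact Quotient.sound ⟨0, by abel⟩
  nsmul := nsmulRec
  zsmul := zsmulRec

/-- The canonical map `PCl S → GC S`. -/
def GC.mk1 : PCl S → GC S := fun a => ⟦(a, 0)⟧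

theorem GC.mk1_add (a b : PCl S) : GC.mk1 S (a + b) = GC.mk1 S a + GC.mk1 S b :=
  Quotient.sound ⟨0, by dsimp only; abel⟩

theorem GC.mk1_inj {a b : PCl S} (h : GC.mk1 S a = GC.mk1 S b) :
    ∃ e : PCl S, a + e = b + e := by
  obtain ⟨e, he⟩ := Quotient.exact h
  exact ⟨e, by simpa using he⟩

/-- The map on the free abelian group. -/
noncomputable def toGC0 : FreeAbelianGroup (PMod S) →+ GC S :=
  FreeAbelianGroup.lift (fun P : PMod S => GC.mk1 S ⟦P⟧)

theorem toGC0_ker : ∀ x ∈ AddSubgroup.closure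
    {x | ∃ A B C : PMod S, Nonempty (B.carrier ≃ₗ[S] A.carrier × C.carrier) ∧
      x = FreeAbelianGroup.of B - FreeAbelianGroup.of A - FreeAbelianGroup.of C},
    toGC0 S x = 0 := by
  intro x hx
  refine (AddSubgroup.closure_le (AddMonoidHom.ker (toGC0 S))).mpr ?_ hx
  rintro y ⟨A, B, C, ⟨e⟩, rfl⟩
  have hB : (⟦B⟧ : PCl S) = ⟦A⟧ + ⟦C⟧ := Quotient.sound ⟨e⟩
  show toGC0 S _ = 0
  rw [map_sub, map_sub]
  simp only [toGC0, FreeAbelianGroup.lift_apply_of]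
  rw [hB, GC.mk1_add]
  abel

/-- The map `K0 S → GC S`. -/
noncomputable def toGC : K0 S →+ GC S :=
  QuotientAddGroup.lift _ (toGC0 S) (toGC0_ker S)

theorem toGC_cls (P : Type) [AddCommGroup P] [Module S P] [Module.Finite S P]
    [Module.Projective S P] : toGC S (K0.cls S P) = GC.mk1 S ⟦PMod.mk P⟧ := by
  refine Eq.trans (QuotientAddGroup.lift_mk' _ _ _) ?_
  simp only [toGC0, FreeAbelianGroup.lift_apply_of]

/-- Equal `K₀`-classes are stably isomorphic. -/
theorem K0.cls_eq_iff_stable {S : Type} [Ring S] {P Q : Type}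
    [AddCommGroup P] [Module S P] [Module.Finite S P] [Module.Projective S P]
    [AddCommGroup Q] [Module S Q] [Module.Finite S Q] [Module.Projective S Q]
    (h : K0.cls S P = K0.cls S Q) :
    ∃ X : PMod S, Nonempty ((P × X.carrier) ≃ₗ[S] (Q × X.carrier)) := by
  have h2 := congrArg (toGC S) h
  rw [toGC_cls, toGC_cls] at h2
  obtain ⟨e, he⟩ := GC.mk1_inj S h2
  obtain ⟨X, rfl⟩ := Quotient.exists_rep e
  rw [PCl.mk_add, PCl.mk_add] at he
  exact ⟨X, Quotient.exact he⟩

/-- Every element of `K0 S` is a difference of two classes. -/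
theorem K0.exists_decomp (x : K0 S) : ∃ P Q : PMod S,
    x = K0.cls S P.carrier - K0.cls S Q.carrier := by
  obtain ⟨y, rfl⟩ := Quotient.exists_rep x
  show ∃ P Q : PMod S, QuotientAddGroup.mk y = _ - _
  induction y using FreeAbelianGroup.induction_on with
  | zero =>
    refine ⟨PMod.zero S, PMod.zero S, ?_⟩
    refine Eq.trans ?_ (sub_self (K0.cls S (PMod.zero S).carrier)).symm
    rfl
  | of P =>
    refine ⟨P, PMod.zero S, ?_⟩
    show QuotientAddGroup.mk _ = K0.cls S P.carrier - K0.cls S (Fin 0 → S)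
    rw [K0.cls_zero, sub_zero]
    rfl
  | neg P _ =>
    refine ⟨PMod.zero S, P, ?_⟩
    show QuotientAddGroup.mk _ = K0.cls S (Fin 0 → S) - K0.cls S P.carrier
    rw [K0.cls_zero, zero_sub]
    rfl
  | add y z ihy ihz =>
    obtain ⟨P, Q, hy⟩ := ihy
    obtain ⟨P', Q', hz⟩ := ihz
    refine ⟨PMod.prod P P', PMod.prod Q Q', ?_⟩
    have : (QuotientAddGroup.mk (y + z) : K0 S)
        = QuotientAddGroup.mk y + QuotientAddGroup.mk z := rfl
    rw [this, hy, hz]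
    show _ = K0.cls S (P.carrier × P'.carrier) - K0.cls S (Q.carrier × Q'.carrier)
    rw [K0.cls_prod, K0.cls_prod]
    abel

end K0Aux
/-! ### Reduction of modules modulo the maximal ideal -/

section RedAux

variable {R : Type} [CommRing R] [IsLocalRing R]
variable {Λ₀ : Type} [Ring Λ₀] [Module R Λ₀] [IsScalarTower R Λ₀ Λ₀] [SMulCommClass R Λ₀ Λ₀]
variable {Ω : Type} [Ring Ω] {π : Λ₀ →+* Ω}

/-- `𝔪P`, the reduction kernel. -/
abbrev mSub (R : Type) [CommRing R] [IsLocalRing R] (P : Type) [AddCommGroup P]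
    [Module R P] : Submodule R P :=
  (IsLocalRing.maximalIdeal R) • (⊤ : Submodule R P)

/-- Restrict scalars of a `Λ₀`-linear map to `R` along the tower. -/
def rres {P Q : Type} [AddCommGroup P] [Module R P] [Module Λ₀ P] [IsScalarTower R Λ₀ P]
    [AddCommGroup Q] [Module R Q] [Module Λ₀ Q] [IsScalarTower R Λ₀ Q]
    (f : P →ₗ[Λ₀] Q) : P →ₗ[R] Q where
  toFun := f
  map_add' := f.map_add
  map_smul' r p := by
    show f (r • p) = r • f p
    have h1 : r • p = (r • (1 : Λ₀)) • p := by rw [smul_assoc, one_smul]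
    rw [h1, map_smul, smul_assoc, one_smul]

theorem map_mSub {P Q : Type} [AddCommGroup P] [Module R P] [Module Λ₀ P]
    [IsScalarTower R Λ₀ P] [AddCommGroup Q] [Module R Q] [Module Λ₀ Q]
    [IsScalarTower R Λ₀ Q] (f : P →ₗ[Λ₀] Q) {x : P} (hx : x ∈ mSub R P) :
    f x ∈ mSub R Q := by
  have h2 : (rres f) x ∈ Submodule.map (rres f) (mSub R P) := Submodule.mem_map_of_mem hx
  rw [Submodule.map_smul''] at h2
  exact Submodule.smul_mono le_rfl le_top h2

theorem smul_mem_mSub {P : Type} [AddCommGroup P] [Module R P] [Module Λ₀ P]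
    [IsScalarTower R Λ₀ P] (a : Λ₀) {x : P} (hx : x ∈ mSub R P) :
    a • x ∈ mSub R P := by
  have hsc : ∀ (r : R) (p : P), a • (r • p) = r • (a • p) := by
    intro r p
    have h1 : r • p = (r • (1 : Λ₀)) • p := by rw [smul_assoc, one_smul]
    have h2 : r • (a • p) = (r • (1 : Λ₀)) • (a • p) := by rw [smul_assoc, one_smul]
    rw [h1, h2, ← mul_smul, ← mul_smul]
    congr 1
    rw [mul_smul_comm, smul_mul_assoc, mul_one, one_mul]
  refine Submodule.smul_induction_on hx ?_ ?_
  · intro r hr p _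
    rw [hsc]
    exact Submodule.smul_mem_smul hr Submodule.mem_top
  · intro y z hy hz
    rw [smul_add]
    exact add_mem hy hz

theorem smul_mem_mSub' {P : Type} [AddCommGroup P] [Module R P] [Module Λ₀ P]
    [IsScalarTower R Λ₀ P] {a : Λ₀} (ha : a ∈ mSub R Λ₀) (p : P) :
    a • p ∈ mSub R P := by
  refine Submodule.smul_induction_on ha ?_ ?_
  · intro r hr b _
    rw [smul_assoc]
    exact Submodule.smul_mem_smul hr Submodule.mem_top
  · intro y z hy hz
    rw [add_smul]
    exact add_mem hy hz

/-- `𝔪P` as a `Λ₀`-submodule. -/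
def redSub (P : Type) [AddCommGroup P] [Module R P] [Module Λ₀ P]
    [IsScalarTower R Λ₀ P] : Submodule Λ₀ P where
  carrier := mSub R P
  add_mem' := fun h h' => add_mem h h'
  zero_mem' := zero_mem _
  smul_mem' := fun a x hx => smul_mem_mSub a hx

/-- Any `Λ₀`-linear map between modules with reductions induces an `Ω`-linear map on the
reductions. -/
theorem exists_redMap (hπs : Function.Surjective π)
    {P P' W W' : Type}
    [AddCommGroup P] [Module R P] [Module Λ₀ P] [IsScalarTower R Λ₀ P]
    [AddCommGroup P'] [Module R P'] [Module Λ₀ P'] [IsScalarTower R Λ₀ P']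
    [AddCommGroup W] [Module Ω W] [AddCommGroup W'] [Module Ω W']
    {q : P →+ W} {q' : P' →+ W'} (hq : IsReduction R π q) (hq' : IsReduction R π q')
    (f : P →ₗ[Λ₀] P') : ∃ F : W →ₗ[Ω] W', ∀ p : P, F (q p) = q' (f p) := by
  choose sec hsec using hq.surjective
  have key : ∀ p : P, q' (f (sec (q p))) = q' (f p) := by
    intro p
    have h2 : sec (q p) - p ∈ mSub R P := by
      refine (hq.ker _).1 ?_
      rw [map_sub, hsec, sub_self]
    have h3 : f (sec (q p)) - f p ∈ mSub R P' := by
      rw [← map_sub]; exact map_mSub f h2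
    have h4 : q' (f (sec (q p)) - f p) = 0 := (hq'.ker _).2 h3
    rw [map_sub] at h4
    exact sub_eq_zero.mp h4
  refine ⟨{ toFun := fun w => q' (f (sec w)), map_add' := ?_, map_smul' := ?_ },
    fun p => key p⟩
  · intro w w'
    obtain ⟨p, rfl⟩ := hq.surjective w
    obtain ⟨p', rfl⟩ := hq.surjective w'
    show q' (f (sec (q p + q p'))) = q' (f (sec (q p))) + q' (f (sec (q p')))
    rw [key p, key p', ← map_add q, key, map_add, map_add]
  · intro ω w
    obtain ⟨a, rfl⟩ := hπs ω
    obtain ⟨p, rfl⟩ := hq.surjective w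
    simp only [RingHom.id_apply]
    show q' (f (sec (π a • q p))) = π a • q' (f (sec (q p)))
    rw [key p, ← hq.equivariant, key, map_smul, hq'.equivariant]

theorem red_equiv_of_equiv (hπs : Function.Surjective π)
    {P P' W W' : Type}
    [AddCommGroup P] [Module R P] [Module Λ₀ P] [IsScalarTower R Λ₀ P]
    [AddCommGroup P'] [Module R P'] [Module Λ₀ P'] [IsScalarTower R Λ₀ P']
    [AddCommGroup W] [Module Ω W] [AddCommGroup W'] [Module Ω W']
    {q : P →+ W} {q' : P' →+ W'} (hq : IsReduction R π q) (hq' : IsReduction R π q')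
    (e : P ≃ₗ[Λ₀] P') : Nonempty (W ≃ₗ[Ω] W') := by
  obtain ⟨F, hF⟩ := exists_redMap hπs hq hq' e.toLinearMap
  obtain ⟨G, hG⟩ := exists_redMap hπs hq' hq e.symm.toLinearMap
  refine ⟨LinearEquiv.ofLinear F G ?_ ?_⟩
  · apply LinearMap.ext
    intro w'
    obtain ⟨p', rfl⟩ := hq'.surjective w'
    simp only [LinearMap.comp_apply, LinearMap.id_apply]
    rw [hG, hF]
    show q' (e (e.symm p')) = q' p'
    rw [e.apply_symm_apply]
  · apply LinearMap.ext
    intro w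
    obtain ⟨p, rfl⟩ := hq.surjective w
    simp only [LinearMap.comp_apply, LinearMap.id_apply]
    rw [hF, hG]
    show q (e.symm (e p)) = q p
    rw [e.symm_apply_apply]

theorem mSub_pi {n : ℕ} (x : Fin n → Λ₀) :
    x ∈ mSub R (Fin n → Λ₀) ↔ ∀ i, x i ∈ mSub R Λ₀ := by
  constructor
  · intro hx i
    refine Submodule.smul_induction_on hx ?_ ?_
    · intro r hr p _
      rw [Pi.smul_apply]
      exact Submodule.smul_mem_smul hr Submodule.mem_top
    · intro y z hy hz
      rw [Pi.add_apply]
      exact add_mem hy hz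
  · intro h
    rw [← Finset.univ_sum_single x]
    refine Submodule.sum_mem _ fun i _ => ?_
    have h2 := Submodule.mem_map_of_mem
      (f := LinearMap.single R (fun _ : Fin n => Λ₀) i) (h i)
    rw [Submodule.map_smul''] at h2
    exact Submodule.smul_mono le_rfl le_top h2

/-- The coordinatewise reduction of a finite free module. -/
def piRed (π : Λ₀ →+* Ω) (n : ℕ) : (Fin n → Λ₀) →+ (Fin n → Ω) where
  toFun x i := π (x i)
  map_zero' := by ext i; simp
  map_add' x y := by ext i; simp

theorem isReduction_pi (hπs : Function.Surjective π)
    (hπk : ∀ a : Λ₀, π a = 0 ↔ a ∈ mSub R Λ₀) (n : ℕ) :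
    IsReduction R π (piRed π n) where
  surjective := fun y => ⟨fun i => Function.surjInv hπs (y i),
    funext fun i => Function.surjInv_eq hπs (y i)⟩
  equivariant := fun a x => funext fun i => by
    show π (a • x i) = π a * π (x i)
    rw [smul_eq_mul, map_mul]
  ker := fun x => by
    constructor
    · intro h
      exact (mSub_pi x).2 fun i => (hπk (x i)).1 (congrFun h i)
    · intro h
      exact funext fun i => (hπk (x i)).2 ((mSub_pi x).1 h i)

theorem mSub_prod {P P' : Type} [AddCommGroup P] [Module R P]
    [AddCommGroup P'] [Module R P'] (x : P × P') :
    x ∈ mSub R (P × P') ↔ x.1 ∈ mSub R P ∧ x.2 ∈ mSub R P' := by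
  constructor
  · intro hx
    constructor
    · refine Submodule.smul_induction_on hx ?_ ?_
      · intro r hr p _
        exact Submodule.smul_mem_smul hr Submodule.mem_top
      · intro y z hy hz
        exact add_mem hy hz
    · refine Submodule.smul_induction_on hx ?_ ?_
      · intro r hr p _
        exact Submodule.smul_mem_smul hr Submodule.mem_top
      · intro y z hy hz
        exact add_mem hy hz
  · rintro ⟨h1, h2⟩
    have hx : x = (x.1, (0 : P')) + ((0 : P), x.2) := by ext <;> simp
    rw [hx]
    refine add_mem ?_ ?_
    · have h3 := Submodule.mem_map_of_mem (f := LinearMap.inl R P P') h1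
      rw [Submodule.map_smul''] at h3
      exact Submodule.smul_mono le_rfl le_top h3
    · have h3 := Submodule.mem_map_of_mem (f := LinearMap.inr R P P') h2
      rw [Submodule.map_smul''] at h3
      exact Submodule.smul_mono le_rfl le_top h3

theorem isReduction_prod {P P' W W' : Type}
    [AddCommGroup P] [Module R P] [Module Λ₀ P]
    [AddCommGroup P'] [Module R P'] [Module Λ₀ P']
    [AddCommGroup W] [Module Ω W] [AddCommGroup W'] [Module Ω W']
    {q : P →+ W} {q' : P' →+ W'} (hq : IsReduction R π q) (hq' : IsReduction R π q') :
    IsReduction R π (q.prodMap q') where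
  surjective := hq.surjective.prodMap hq'.surjective
  equivariant := fun a m =>
    Prod.ext (hq.equivariant a m.1) (hq'.equivariant a m.2)
  ker := fun m => by
    rw [mSub_prod]
    constructor
    · intro h
      exact ⟨(hq.ker _).1 (congrArg Prod.fst h), (hq'.ker _).1 (congrArg Prod.snd h)⟩
    · rintro ⟨h1, h2⟩
      exact Prod.ext ((hq.ker _).2 h1) ((hq'.ker _).2 h2)

theorem finite_of_red (hπs : Function.Surjective π) {P W : Type}
    [AddCommGroup P] [Module Λ₀ P] [Module.Finite Λ₀ P]
    [AddCommGroup W] [Module Ω W] (q : P →+ W)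
    (hsurj : Function.Surjective q) (hequiv : ∀ (a : Λ₀) (m : P), q (a • m) = π a • q m) :
    Module.Finite Ω W := by
  classical
  obtain ⟨s, hs⟩ := Module.finite_def.mp ‹Module.Finite Λ₀ P›
  refine ⟨⟨s.image q, ?_⟩⟩
  rw [eq_top_iff]
  rintro w -
  obtain ⟨p, rfl⟩ := hsurj w
  let T : Submodule Λ₀ P :=
    { carrier := q ⁻¹' (Submodule.span Ω ((s.image q : Finset W) : Set W) : Set W)
      add_mem' := fun {x y} hx hy => by
        rw [Set.mem_preimage] at hx hy ⊢
        rw [map_add]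
        exact add_mem hx hy
      zero_mem' := by
        rw [Set.mem_preimage, map_zero]
        exact zero_mem _
      smul_mem' := fun a x hx => by
        rw [Set.mem_preimage] at hx ⊢
        rw [hequiv]
        exact Submodule.smul_mem _ _ hx }
  have hp : p ∈ T := by
    have h1 : (⊤ : Submodule Λ₀ P) ≤ T := by
      rw [← hs]
      refine Submodule.span_le.mpr ?_
      intro x hx
      exact Submodule.subset_span (Finset.mem_coe.mpr (Finset.mem_image_of_mem q hx))
    exact h1 Submodule.mem_top
  exact hp

end RedAux
section RedAux2

variable {R : Type} [CommRing R] [IsLocalRing R]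
variable {Λ₀ : Type} [Ring Λ₀] [Module R Λ₀] [IsScalarTower R Λ₀ Λ₀] [SMulCommClass R Λ₀ Λ₀]
variable {Ω : Type} [Ring Ω] {π : Λ₀ →+* Ω}

/-- A retraction of a finitely generated projective module off a finite free module. -/
theorem exists_retraction (T M : Type) [Ring T] [AddCommGroup M] [Module T M]
    [Module.Finite T M] [Module.Projective T M] :
    ∃ (m : ℕ) (f : (Fin m → T) →ₗ[T] M) (g : M →ₗ[T] (Fin m → T)),
      f.comp g = LinearMap.id := by
  obtain ⟨m, v, hv⟩ := Module.Finite.exists_fin (R := T) (M := M)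
  let f : (Fin m → T) →ₗ[T] M :=
    { toFun := fun c => ∑ i, c i • v i
      map_add' := by
        intro c d
        simp [add_smul, Finset.sum_add_distrib]
      map_smul' := by
        intro a c
        simp [mul_smul, Finset.smul_sum] }
  have hf : Function.Surjective f := by
    rw [← LinearMap.range_eq_top, eq_top_iff, ← hv]
    refine Submodule.span_le.mpr ?_
    rintro x ⟨i, rfl⟩
    refine ⟨Pi.single i 1, ?_⟩
    simp only [f, LinearMap.coe_mk, AddHom.coe_mk]
    rw [Finset.sum_eq_single i]
    · rw [Pi.single_eq_same, one_smul]
    · intro j _ hj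
      rw [Pi.single_eq_of_ne hj, zero_smul]
    · intro h
      exact absurd (Finset.mem_univ i) h
  obtain ⟨g, hg⟩ := Module.projective_lifting_property f LinearMap.id hf
  exact ⟨m, f, g, hg⟩

/-- Bundled reduction data: a f.g. projective `Ω`-module realizing `k ⊗ P`. -/
structure RedData (R : Type) [CommRing R] [IsLocalRing R] {Λ₀ : Type} [Ring Λ₀]
    {Ω : Type} [Ring Ω] (π : Λ₀ →+* Ω)
    (P : Type) [AddCommGroup P] [Module R P] [Module Λ₀ P] : Type 1 where
  W : Type
  [iA : AddCommGroup W]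
  [iM : Module Ω W]
  q : P →+ W
  red : IsReduction R π q
  iF : Module.Finite Ω W
  iP : Module.Projective Ω W

/-- Construction of the reduction `P/𝔪P` of a finitely generated projective module. -/
noncomputable def mkRedData (hπs : Function.Surjective π)
    (hπk : ∀ a : Λ₀, π a = 0 ↔ a ∈ mSub R Λ₀)
    (P : Type) [AddCommGroup P] [Module R P] [Module Λ₀ P] [IsScalarTower R Λ₀ P]
    [Module.Finite Λ₀ P] [Module.Projective Λ₀ P] : RedData R π P := by
  have key : ∀ a a' : Λ₀, π a = π a' → ∀ w : P ⧸ redSub (R := R) (Λ₀ := Λ₀) P, (a • w : P ⧸ redSub (R := R) (Λ₀ := Λ₀) P) = a' • w := by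
    intro a a' h w
    obtain ⟨p, rfl⟩ := Submodule.Quotient.mk_surjective _ w
    rw [← Submodule.Quotient.mk_smul, ← Submodule.Quotient.mk_smul, Submodule.Quotient.eq,
      ← sub_smul]
    have ha : a - a' ∈ mSub R Λ₀ := (hπk _).1 (by rw [map_sub, h, sub_self])
    exact smul_mem_mSub' ha p
  letI : SMul Ω (P ⧸ redSub (R := R) (Λ₀ := Λ₀) P) := ⟨fun ω w => Function.surjInv hπs ω • w⟩
  have hsmul : ∀ (a : Λ₀) (w : P ⧸ redSub (R := R) (Λ₀ := Λ₀) P), π a • w = a • w := fun a w =>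
    key _ _ (Function.surjInv_eq hπs (π a)) w
  letI instΩ : Module Ω (P ⧸ redSub (R := R) (Λ₀ := Λ₀) P) :=
    Function.Surjective.moduleLeft π hπs hsmul
  let q0 : P →+ (P ⧸ redSub (R := R) (Λ₀ := Λ₀) P) := (redSub (R := R) (Λ₀ := Λ₀) P).mkQ.toAddMonoidHom
  have hred : IsReduction R π q0 := by
    constructor
    · exact Submodule.Quotient.mk_surjective _
    · intro a m
      rw [hsmul]
      exact map_smul (redSub (R := R) (Λ₀ := Λ₀) P).mkQ a m
    · intro m
      exact Submodule.Quotient.mk_eq_zero _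
  have hfin : Module.Finite Ω (P ⧸ redSub (R := R) (Λ₀ := Λ₀) P) :=
    finite_of_red hπs q0 hred.surjective hred.equivariant
  have hproj : Module.Projective Ω (P ⧸ redSub (R := R) (Λ₀ := Λ₀) P) := by
    obtain ⟨n, f, g, hfg⟩ := exists_retraction Λ₀ P
    obtain ⟨F, hF⟩ := exists_redMap hπs (isReduction_pi hπs hπk n) hred f
    obtain ⟨G, hG⟩ := exists_redMap hπs hred (isReduction_pi hπs hπk n) g
    refine Module.Projective.of_split G F ?_
    apply LinearMap.ext
    intro w
    obtain ⟨p, rfl⟩ := hred.surjective w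
    simp only [LinearMap.comp_apply, LinearMap.id_apply]
    rw [hG, hF]
    show q0 (f.comp g p) = q0 p
    rw [hfg]
    rfl
  exact { W := P ⧸ redSub (R := R) (Λ₀ := Λ₀) P, q := q0, red := hred, iF := hfin, iP := hproj }

/-- Key lifting lemma: an isomorphism of reductions lifts to an isomorphism of the
finitely generated projective modules themselves. -/
theorem equiv_of_red_equiv [Module.Finite R Λ₀] (hπs : Function.Surjective π)
    {P Q W W' : Type}
    [AddCommGroup P] [Module R P] [Module Λ₀ P] [IsScalarTower R Λ₀ P]
    [Module.Finite Λ₀ P] [Module.Projective Λ₀ P]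
    [AddCommGroup Q] [Module R Q] [Module Λ₀ Q] [IsScalarTower R Λ₀ Q]
    [Module.Finite Λ₀ Q] [Module.Projective Λ₀ Q]
    [AddCommGroup W] [Module Ω W] [AddCommGroup W'] [Module Ω W']
    {q : P →+ W} {q' : Q →+ W'} (hq : IsReduction R π q) (hq' : IsReduction R π q')
    (e : W ≃ₗ[Ω] W') : Nonempty (P ≃ₗ[Λ₀] Q) := by
  letI : Module Λ₀ W := Module.compHom W π
  letI : Module Λ₀ W' := Module.compHom W' π
  let qL : P →ₗ[Λ₀] W :=
    { toFun := q, map_add' := q.map_add, map_smul' := fun a m => hq.equivariant a m }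
  let qL' : Q →ₗ[Λ₀] W' :=
    { toFun := q', map_add' := q'.map_add, map_smul' := fun a m => hq'.equivariant a m }
  let eL : W →ₗ[Λ₀] W' :=
    { toFun := e, map_add' := map_add e,
      map_smul' := fun a w => by
        show e ((π a) • w) = (π a) • e w
        exact map_smul e (π a) w }
  obtain ⟨ψ, hψ⟩ := Module.projective_lifting_property qL' (eL.comp qL) hq'.surjective
  have hψp : ∀ p : P, q' (ψ p) = e (q p) := fun p => LinearMap.congr_fun hψ p
  haveI hQR : Module.Finite R Q := Module.Finite.trans Λ₀ Q
  haveI hPR : Module.Finite R P := Module.Finite.trans Λ₀ P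
  -- surjectivity of ψ via Nakayama
  have hsub : ∀ y : Q, ∃ p : P, y - ψ p ∈ mSub R Q := by
    intro y
    obtain ⟨p, hp⟩ := hq.surjective (e.symm (q' y))
    refine ⟨p, (hq'.ker _).1 ?_⟩
    rw [map_sub, hψp, hp, e.apply_symm_apply, sub_self]
  have hψsurj : Function.Surjective ψ := by
    set Cq : Submodule R Q := LinearMap.range (rres (R := R) ψ) with hCq
    have htop : (⊤ : Submodule R (Q ⧸ Cq)) ≤ (IsLocalRing.maximalIdeal R) • ⊤ := by
      rintro c -
      obtain ⟨y, rfl⟩ := Submodule.Quotient.mk_surjective _ c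
      obtain ⟨p, hp⟩ := hsub y
      have h1 : (Submodule.Quotient.mk y : Q ⧸ Cq) = Submodule.Quotient.mk (y - ψ p) := by
        rw [Submodule.Quotient.eq, sub_sub_cancel]
        exact ⟨p, rfl⟩
      rw [h1]
      have h2 : Submodule.Quotient.mk (p := Cq) (y - ψ p)
          ∈ Submodule.map Cq.mkQ (mSub R Q) := Submodule.mem_map_of_mem hp
      rw [Submodule.map_smul''] at h2
      exact Submodule.smul_mono le_rfl le_top h2
    haveI : Module.Finite R (Q ⧸ Cq) :=
      Module.Finite.of_surjective Cq.mkQ (Submodule.Quotient.mk_surjective _)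
    have hC : (⊤ : Submodule R (Q ⧸ Cq)) = ⊥ :=
      Submodule.eq_bot_of_le_smul_of_le_jacobson_bot (IsLocalRing.maximalIdeal R) ⊤
        (Module.finite_def.mp inferInstance) htop (IsLocalRing.maximalIdeal_le_jacobson ⊥)
    intro y
    have h0 : (Submodule.Quotient.mk y : Q ⧸ Cq) = 0 := by
      have hmem : (Submodule.Quotient.mk y : Q ⧸ Cq) ∈ (⊥ : Submodule R (Q ⧸ Cq)) := by
        rw [← hC]; exact Submodule.mem_top
      exact (Submodule.mem_bot _).mp hmem
    obtain ⟨p, hp⟩ := (Submodule.Quotient.mk_eq_zero _).mp h0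
    exact ⟨p, hp⟩
  obtain ⟨σ, hσ⟩ := Module.projective_lifting_property ψ LinearMap.id hψsurj
  have hσp : ∀ y : Q, ψ (σ y) = y := fun y => LinearMap.congr_fun hσ y
  -- injectivity of ψ via Nakayama
  have hψinj : Function.Injective ψ := by
    set K : Submodule R P := LinearMap.ker (rres (R := R) ψ) with hK
    have hK1 : K ≤ mSub R P := by
      intro x hx
      have hx0 : ψ x = 0 := hx
      have h2 : e (q x) = 0 := by rw [← hψp, hx0, map_zero]
      have h3 : q x = 0 := by
        rwa [LinearEquiv.map_eq_zero_iff] at h2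
      exact (hq.ker _).1 h3
    set ρ : P →ₗ[Λ₀] P := LinearMap.id - σ.comp ψ with hρ
    have hρK : ∀ x : P, ψ (ρ x) = 0 := by
      intro x
      simp [hρ, map_sub, hσp]
    have hρfix : ∀ x ∈ K, ρ x = x := by
      intro x hx
      have hx0 : ψ x = 0 := hx
      simp [hρ, hx0]
    have hmapK : Submodule.map (rres (R := R) ρ) ⊤ ≤ K := by
      rintro _ ⟨z, -, rfl⟩
      exact hρK z
    have hKle : K ≤ (IsLocalRing.maximalIdeal R) • K := by
      intro x hx
      have h2 : (rres (R := R) ρ) x ∈ Submodule.map (rres (R := R) ρ) (mSub R P) :=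
        Submodule.mem_map_of_mem (hK1 hx)
      rw [Submodule.map_smul''] at h2
      have h4 := Submodule.smul_mono le_rfl hmapK h2
      rwa [show (rres (R := R) ρ) x = x from hρfix x hx] at h4
    have hKfg : K.FG := by
      have hKeq : K = Submodule.map (rres (R := R) ρ) ⊤ :=
        le_antisymm (fun x hx => ⟨x, trivial, hρfix x hx⟩) hmapK
      rw [hKeq]
      exact (Module.finite_def.mp hPR).map _
    have hK0 : K = ⊥ :=
      Submodule.eq_bot_of_le_smul_of_le_jacobson_bot (IsLocalRing.maximalIdeal R) K
        hKfg hKle (IsLocalRing.maximalIdeal_le_jacobson ⊥)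
    intro x y hxy
    have hmem : x - y ∈ K := by
      show (rres (R := R) ψ) (x - y) = 0
      rw [map_sub]
      show ψ x - ψ y = 0
      rw [hxy, sub_self]
    rw [hK0] at hmem
    exact sub_eq_zero.mp ((Submodule.mem_bot _).mp hmem)
  exact ⟨LinearEquiv.ofBijective ψ ⟨hψinj, hψsurj⟩⟩

end RedAux2
/-- Equality of `K₀`-classes gives an isomorphism after adding a finite free module. -/
theorem stable_iso_free {S : Type} [Ring S] {P Q : Type}
    [AddCommGroup P] [Module S P] [Module.Finite S P] [Module.Projective S P]
    [AddCommGroup Q] [Module S Q] [Module.Finite S Q] [Module.Projective S Q]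
    (h : K0.cls S P = K0.cls S Q) :
    ∃ m : ℕ, Nonempty ((P × (Fin m → S)) ≃ₗ[S] (Q × (Fin m → S))) := by
  obtain ⟨X, ⟨e⟩⟩ := K0.cls_eq_iff_stable h
  obtain ⟨m, f, g, hfg⟩ := exists_retraction S X.carrier
  have hfg' : ∀ x, f (g x) = x := fun x => LinearMap.congr_fun hfg x
  set Y := LinearMap.ker f with hY
  let r : (Fin m → S) →ₗ[S] (Fin m → S) := LinearMap.id - g.comp f
  have hmem : ∀ c : Fin m → S, r c ∈ Y := by
    intro c
    rw [LinearMap.mem_ker]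
    show f (c - g (f c)) = 0
    rw [map_sub, hfg', sub_self]
  let u : (Fin m → S) →ₗ[S] ↥Y := r.codRestrict Y hmem
  let fwd : (Fin m → S) →ₗ[S] X.carrier × ↥Y := LinearMap.prod f u
  let bwd : X.carrier × ↥Y →ₗ[S] (Fin m → S) :=
    g.comp (LinearMap.fst S X.carrier ↥Y) + Y.subtype.comp (LinearMap.snd S X.carrier ↥Y)
  have h1 : fwd.comp bwd = LinearMap.id := by
    apply LinearMap.ext
    rintro ⟨x, k⟩
    have hk : f k.1 = 0 := k.2
    have hbwd : bwd (x, k) = g x + k.1 := rfl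
    have hfx : f (g x + k.1) = x := by rw [map_add, hfg', hk, add_zero]
    simp only [LinearMap.comp_apply, LinearMap.id_apply, hbwd]
    refine Prod.ext ?_ (Subtype.ext ?_)
    · show f (g x + k.1) = x
      exact hfx
    · show (g x + k.1) - g (f (g x + k.1)) = k.1
      rw [hfx, add_sub_cancel_left]
  have h2 : bwd.comp fwd = LinearMap.id := by
    apply LinearMap.ext
    intro c
    show g (f c) + (c - g (f c)) = c
    abel
  let e2 : (Fin m → S) ≃ₗ[S] X.carrier × ↥Y := LinearEquiv.ofLinear fwd bwd h1 h2
  refine ⟨m, ⟨?_⟩⟩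
  exact ((LinearEquiv.refl S P).prodCongr e2).trans
    (((LinearEquiv.prodAssoc S P X.carrier ↥Y).symm).trans
      ((e.prodCongr (LinearEquiv.refl S ↥Y)).trans
        ((LinearEquiv.prodAssoc S Q X.carrier ↥Y).trans
          ((LinearEquiv.refl S Q).prodCongr e2.symm))))
set_option maxHeartbeats 1000000 in
set_option synthInstance.maxHeartbeats 400000 in
/-- **Injectivity of `b : K₀(Λ) → K₀(Ω)`** (first part of Proposition 2.5 of the paper).

In the setting of an `R`-order `Λ` (with `R` a discrete valuation ring with maximal ideal
`𝔪` and fraction field `K`) in a finite dimensional `K`-algebra `A`, with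
`Ω = k ⊗_R Λ = Λ/𝔪Λ`:  the homomorphism `b : K₀(Λ) → K₀(Ω)` determined on classes of
finitely generated projective `Λ`-modules by `b([P]) = [k ⊗_R P] = [P/𝔪P]` is injective.
(The reduction `k ⊗_R P` is encoded by a surjective `Λ`-equivariant additive map
`q : P → W` onto an `Ω`-module `W` with kernel `𝔪P`.) -/
theorem K0_reduction_injective
    (R : Type) [CommRing R] [IsDomain R] [IsDiscreteValuationRing R]
    (K : Type) [Field K] [Algebra R K] [IsFractionRing R K]
    (A : Type) [Ring A] [Algebra K A] [FiniteDimensional K A]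
    [Algebra R A] [IsScalarTower R K A]
    (Λ : Subalgebra R A) (hΛ : IsOrder R K A Λ)
    (Ω : Type) [Ring Ω] (π : ↥Λ →+* Ω) (hπ : IsResidueRing R A π)
    (b : K0 ↥Λ →+ K0 Ω)
    (hb : ∀ (P : Type) [AddCommGroup P] [Module R P] [Module ↥Λ P]
      [IsScalarTower R ↥Λ P] [Module.Finite ↥Λ P] [Module.Projective ↥Λ P]
      (W : Type) [AddCommGroup W] [Module Ω W] [Module.Finite Ω W] [Module.Projective Ω W]
      (q : P →+ W), IsReduction R π q → b (K0.cls ↥Λ P) = K0.cls Ω W) :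
    Function.Injective b := by
  haveI hfinΛ : Module.Finite R ↥Λ := hΛ.fg
  have hπk : ∀ a : ↥Λ, π a = 0 ↔ a ∈ mSub R ↥Λ := hπ.ker
  rw [injective_iff_map_eq_zero]
  intro x hx
  obtain ⟨Pm, Qm, rfl⟩ := K0.exists_decomp ↥Λ x
  letI mP : Module R Pm.carrier := Module.compHom Pm.carrier (algebraMap R ↥Λ)
  letI tP : IsScalarTower R ↥Λ Pm.carrier := ⟨fun r a p => by
    show (r • a) • p = (algebraMap R ↥Λ r) • (a • p)
    rw [Algebra.smul_def, mul_smul]⟩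
  letI mQ : Module R Qm.carrier := Module.compHom Qm.carrier (algebraMap R ↥Λ)
  letI tQ : IsScalarTower R ↥Λ Qm.carrier := ⟨fun r a p => by
    show (r • a) • p = (algebraMap R ↥Λ r) • (a • p)
    rw [Algebra.smul_def, mul_smul]⟩
  let DP := mkRedData (π := π) hπ.surjective hπk Pm.carrier
  let DQ := mkRedData (π := π) hπ.surjective hπk Qm.carrier
  letI := DP.iA; letI := DP.iM; letI := DP.iF; letI := DP.iP
  letI := DQ.iA; letI := DQ.iM; letI := DQ.iF; letI := DQ.iP
  have hbP : b (K0.cls ↥Λ Pm.carrier) = K0.cls Ω DP.W := hb Pm.carrier DP.W DP.q DP.red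
  have hbQ : b (K0.cls ↥Λ Qm.carrier) = K0.cls Ω DQ.W := hb Qm.carrier DQ.W DQ.q DQ.red
  rw [map_sub, hbP, hbQ, sub_eq_zero] at hx
  obtain ⟨m, ⟨eW⟩⟩ := stable_iso_free hx
  have redP2 : IsReduction R π (DP.q.prodMap (piRed π m)) :=
    isReduction_prod DP.red (isReduction_pi hπ.surjective hπk m)
  have redQ2 : IsReduction R π (DQ.q.prodMap (piRed π m)) :=
    isReduction_prod DQ.red (isReduction_pi hπ.surjective hπk m)
  obtain ⟨e2⟩ := equiv_of_red_equiv (π := π) hπ.surjective redP2 redQ2 eW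
  have hcls : K0.cls ↥Λ (Pm.carrier × (Fin m → ↥Λ))
      = K0.cls ↥Λ (Qm.carrier × (Fin m → ↥Λ)) := K0.cls_congr e2
  rw [K0.cls_prod, K0.cls_prod] at hcls
  rw [add_right_cancel hcls, sub_self]
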